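/- Let k be a field, let U, P, D be matrices over k such that the product U·P·D is defined, and let α ∈ k be a nonzero element. Let M be the block matrix M = [[U·P, 0], [α·P, P·D]]. Then there exist square matrices L and R over k with determinant one such that L·M·R = [[0, −α⁻¹·U·P·D], [α·P, 0]]. Consequently rank(M) = rank(P) + rank(U·P·D), and M has full rank if and only if P and U·P·D both have full rank for the same reason. Moreover, if P and U·P·D are square of sizes n and m respectively, then det(M) = (−1)^{m(n+1)} · det(P) · det(U·P·D) · α^{n−m}. -/

import Mathlib

set_option maxRecDepth 40000

section Helpers

open Matrix Module LinearMap Equiv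

variable {R : Type*} [Field R]
variable {m n m' n' : Type*} [Fintype m] [Fintype n] [Fintype m'] [Fintype n']
  [DecidableEq m] [DecidableEq n] [DecidableEq m'] [DecidableEq n']

omit [Fintype m] [Fintype m'] [DecidableEq m] [DecidableEq n] [DecidableEq m'] [DecidableEq n'] in
lemma aux_rank_reindex (e₁ : m ≃ m') (e₂ : n ≃ n') (A : Matrix m n R) :
    (Matrix.reindex e₁ e₂ A).rank = A.rank := by
  rw [Matrix.rank, Matrix.rank, Matrix.mulVecLin_reindex, LinearMap.range_comp,
    LinearMap.range_comp, LinearEquiv.range, Submodule.map_top, LinearEquiv.finrank_map_eq]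

omit [Fintype m] [DecidableEq m] [DecidableEq n] [DecidableEq m'] [DecidableEq n'] in
lemma aux_rank_submatrix_equiv (A : Matrix m n R) (e₁ : m' ≃ m) (e₂ : n' ≃ n) :
    (A.submatrix e₁ e₂).rank = A.rank := by
  have : A.submatrix ⇑e₁ ⇑e₂ = Matrix.reindex e₁.symm e₂.symm A := rfl
  rw [this, aux_rank_reindex]

lemma aux_range_prodMap {M N M' N' : Type*} [AddCommGroup M] [AddCommGroup N]
    [AddCommGroup M'] [AddCommGroup N'] [Module R M] [Module R N] [Module R M'] [Module R N']
    (f : M →ₗ[R] M') (g : N →ₗ[R] N') :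
    LinearMap.range (f.prodMap g) = (LinearMap.range f).prod (LinearMap.range g) := by
  ext ⟨x, y⟩
  simp only [LinearMap.mem_range, Submodule.mem_prod, LinearMap.prodMap_apply, Prod.ext_iff,
    Prod.exists]
  aesop

lemma aux_finrank_submodule_prod {M N : Type*} [AddCommGroup M] [AddCommGroup N]
    [Module R M] [Module R N] [FiniteDimensional R M] [FiniteDimensional R N]
    (p : Submodule R M) (q : Submodule R N) :
    finrank R (p.prod q) = finrank R p + finrank R q := by
  set f : (↥p × ↥q) →ₗ[R] (M × N) := (p.subtype).prodMap (q.subtype) with hf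
  have hinj : Function.Injective f := by
    rw [← LinearMap.ker_eq_bot, hf, LinearMap.ker_prodMap, Submodule.ker_subtype,
      Submodule.ker_subtype, Submodule.prod_bot]
  have hrange : LinearMap.range f = p.prod q := by
    rw [hf, aux_range_prodMap, Submodule.range_subtype, Submodule.range_subtype]
  rw [← hrange, ← (LinearEquiv.ofInjective f hinj).finrank_eq, Module.finrank_prod]

omit [Fintype m] [Fintype n] [DecidableEq m] [DecidableEq n] in
lemma aux_mulVecLin_fromBlocks_diag (A : Matrix m m' R) (D : Matrix n n' R) :
    (Matrix.fromBlocks A 0 0 D).mulVecLin =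
      ((LinearEquiv.sumArrowLequivProdArrow m n R R).symm :
          ((m → R) × (n → R)) →ₗ[R] (m ⊕ n → R)) ∘ₗ
        (A.mulVecLin.prodMap D.mulVecLin) ∘ₗ
        ((LinearEquiv.sumArrowLequivProdArrow m' n' R R) :
          (m' ⊕ n' → R) →ₗ[R] ((m' → R) × (n' → R))) := by
  ext x i
  cases i <;> rcases x with x | x <;>
    simp [LinearEquiv.sumArrowLequivProdArrow, Equiv.sumArrowEquivProdArrow,
      Matrix.mulVec, Matrix.fromBlocks, dotProduct, Pi.single_apply, Function.comp,
      Finset.sum_ite_eq', mul_comm]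

omit [DecidableEq m] [DecidableEq n] in
lemma aux_rank_fromBlocks_diag (A : Matrix m m' R) (D : Matrix n n' R) :
    (Matrix.fromBlocks A 0 0 D).rank = A.rank + D.rank := by
  rw [Matrix.rank, aux_mulVecLin_fromBlocks_diag, LinearMap.range_comp, LinearMap.range_comp,
    LinearEquiv.range, Submodule.map_top, LinearEquiv.finrank_map_eq, aux_range_prodMap,
    aux_finrank_submodule_prod, Matrix.rank, Matrix.rank]

omit [Fintype m'] [Fintype n'] [DecidableEq m] [DecidableEq m'] [DecidableEq n'] in
lemma aux_inj_iff_rank (A : Matrix m n R) :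
    Function.Injective A.mulVecLin ↔ A.rank = Fintype.card n := by
  rw [← LinearMap.ker_eq_bot]
  have h := LinearMap.finrank_range_add_finrank_ker A.mulVecLin
  rw [Module.finrank_fintype_fun_eq_card] at h
  constructor
  · intro hk
    rw [hk, finrank_bot] at h
    simpa [Matrix.rank] using h
  · intro hr
    rw [Matrix.rank] at hr
    rw [← Submodule.finrank_eq_zero (S := LinearMap.ker A.mulVecLin)]
    omega

omit [Fintype m'] [Fintype n'] [DecidableEq m] [DecidableEq n] [DecidableEq m'] [DecidableEq n'] in
lemma aux_surj_iff_rank (A : Matrix m n R) :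
    Function.Surjective A.mulVecLin ↔ A.rank = Fintype.card m := by
  rw [← LinearMap.range_eq_top]
  constructor
  · intro h; rw [Matrix.rank, h, finrank_top, Module.finrank_fintype_fun_eq_card]
  · intro h
    apply Submodule.eq_top_of_finrank_eq
    rw [← Matrix.rank, h, Module.finrank_fintype_fun_eq_card]

omit [Fintype m'] [Fintype n'] [DecidableEq n] [DecidableEq m'] [DecidableEq n'] in
lemma aux_rank_smul (A : Matrix m n R) {x : R} (hx : x ≠ 0) :
    (x • A).rank = A.rank := by
  have : x • A = (x • (1 : Matrix m m R)) * A := by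
    rw [Matrix.smul_mul, Matrix.one_mul]
  rw [this, Matrix.rank_mul_eq_right_of_isUnit_det]
  simp [Matrix.det_smul, isUnit_iff_ne_zero, hx]

open Fin.NatCast in
lemma aux_finRotate_pow_apply (N a : ℕ) (j : Fin (N + 1)) :
    ((finRotate (N + 1)) ^ a) j = j + (a : Fin (N + 1)) := by
  induction a with
  | zero => simp
  | succ a ih =>
    rw [pow_succ', Equiv.Perm.mul_apply, finRotate_succ_apply, Nat.cast_succ, ih]
    exact add_assoc _ _ _

open Fin.NatCast in
lemma aux_sign_rot (N a b : ℕ) (hab : N = a + b) (π : Equiv.Perm (Fin N))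
    (hπ : ∀ j : Fin N, (π j : ℕ) = if (j : ℕ) < b then a + (j : ℕ) else (j : ℕ) - b) :
    Equiv.Perm.sign π = (-1) ^ (a * b) := by
  cases N with
  | zero =>
    have ha : a = 0 := by omega
    have : π = Equiv.refl _ := by ext j; exact absurd j.2 (by omega)
    rw [this, ha]
    simp
  | succ n =>
    have hπ' : π = (finRotate (n + 1)) ^ a := by
      ext j
      rw [aux_finRotate_pow_apply, hπ j]
      rcases j with ⟨v, hv⟩
      simp only [Fin.val_add, Fin.val_natCast]
      rcases Nat.lt_or_ge v b with hvb | hvb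
      · rw [if_pos hvb, Nat.mod_eq_of_lt (show a < n + 1 by omega),
          Nat.mod_eq_of_lt (by omega)]
        omega
      · rw [if_neg (by omega)]
        rcases Nat.eq_zero_or_pos b with hb | hb
        · rw [hb, Nat.sub_zero]
          have : a % (n + 1) = 0 := by
            have : a = n + 1 := by omega
            simp [this]
          rw [this, Nat.add_zero, Nat.mod_eq_of_lt (by omega)]
        · rw [Nat.mod_eq_of_lt (show a < n + 1 by omega),
            Nat.mod_eq_sub_mod (show n + 1 ≤ v + a by omega),
            Nat.mod_eq_of_lt (by omega)]
          omega
    rw [hπ', map_pow, sign_finRotate, Nat.add_sub_cancel, ← pow_mul]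
    have hN : n + 1 = a + b := by omega
    have parity : ∀ (u v : ℕ), u % 2 = v % 2 → ((-1 : ℤˣ)) ^ u = (-1) ^ v := by
      intro u v huv
      rcases Nat.even_or_odd u with h | h
      · rw [h.neg_one_pow,
          (Nat.even_iff.mpr (by rw [← huv, ← Nat.even_iff]; exact h)).neg_one_pow]
      · rw [h.neg_one_pow,
          (Nat.odd_iff.mpr (by rw [← huv, ← Nat.odd_iff]; exact h)).neg_one_pow]
    apply parity
    have h1 : n * a + a = a * a + a * b := by
      calc n * a + a = (n + 1) * a := by ring
      _ = (a + b) * a := by rw [hN]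
      _ = a * a + a * b := by ring
    have h2 : (a * a + a) % 2 = 0 :=
      Nat.even_iff.mp (by simpa [mul_add, mul_comm] using Nat.even_mul_succ_self a)
    generalize n * a = x at h1 ⊢
    generalize a * a = y at h1 h2
    generalize a * b = z at h1 ⊢
    omega

end Helpers

/-- A matrix has full rank if the linear map it represents is injective or surjective. -/
def Matrix.HasFullRank {k : Type*} [Field k] {α β : Type*} [Fintype α] [Fintype β]
    (M : Matrix α β k) : Prop :=
  Function.Injective M.mulVecLin ∨ Function.Surjective M.mulVecLin

/-- Let `U, P, D` be matrices over a field `k` such that `U·P·D` is defined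
and let `α ≠ 0`.  For the block matrix `M = [[U·P, 0], [α·P, P·D]]` there are square matrices
`L, R` of determinant one with `L·M·R = [[0, -α⁻¹·U·P·D], [α·P, 0]]`; consequently
`rank M = rank P + rank (U·P·D)`, and `M` has full rank iff `P` and `U·P·D` have full rank
for the same reason.  Moreover, if `P` and `U·P·D` are square of sizes `n = b` and `m = a`
respectively, then `det M = (-1)^(m(n+1)) · det P · det (U·P·D) · α^(n-m)`. -/
theorem statement_0 {k : Type*} [Field k] {a b c e : ℕ}
    (U : Matrix (Fin a) (Fin b) k) (P : Matrix (Fin b) (Fin c) k) (D : Matrix (Fin c) (Fin e) k)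
    (α : k) (hα : α ≠ 0)
    (M : Matrix (Fin a ⊕ Fin b) (Fin c ⊕ Fin e) k)
    (hM : M = Matrix.fromBlocks (U * P) 0 (α • P) (P * D)) :
    (∃ (L : Matrix (Fin a ⊕ Fin b) (Fin a ⊕ Fin b) k)
       (R : Matrix (Fin c ⊕ Fin e) (Fin c ⊕ Fin e) k),
      L.det = 1 ∧ R.det = 1 ∧
      L * M * R = Matrix.fromBlocks 0 (-(α⁻¹) • (U * P * D)) (α • P) 0) ∧
    M.rank = P.rank + (U * P * D).rank ∧
    (M.HasFullRank ↔
      ((Function.Injective P.mulVecLin ∧ Function.Injective (U * P * D).mulVecLin) ∨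
       (Function.Surjective P.mulVecLin ∧ Function.Surjective (U * P * D).mulVecLin))) ∧
    (∀ (hbc : b = c) (hae : a = e),
      (M.submatrix (finSumFinEquiv.symm : Fin (a + b) → Fin a ⊕ Fin b)
          (fun j : Fin (a + b) =>
            (finSumFinEquiv.symm (finCongr (by omega : a + b = c + e) j) : Fin c ⊕ Fin e))).det =
        (-1 : k) ^ (a * (b + 1)) * (P.submatrix id (finCongr hbc : Fin b → Fin c)).det *
          ((U * P * D).submatrix id (finCongr hae : Fin a → Fin e)).det *
          α ^ ((b : ℤ) - (a : ℤ))) := by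
  subst hM
  set L : Matrix (Fin a ⊕ Fin b) (Fin a ⊕ Fin b) k :=
    Matrix.fromBlocks 1 ((-α⁻¹) • U) 0 1 with hLdef
  set R : Matrix (Fin c ⊕ Fin e) (Fin c ⊕ Fin e) k :=
    Matrix.fromBlocks 1 ((-α⁻¹) • D) 0 1 with hRdef
  have hLdet : L.det = 1 := by
    rw [hLdef, Matrix.det_fromBlocks_zero₂₁]; simp
  have hRdet : R.det = 1 := by
    rw [hRdef, Matrix.det_fromBlocks_zero₂₁]; simp
  have key : L * Matrix.fromBlocks (U * P) 0 (α • P) (P * D) * R =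
      Matrix.fromBlocks 0 (-(α⁻¹) • (U * P * D)) (α • P) 0 := by
    rw [hLdef, hRdef, Matrix.fromBlocks_multiply, Matrix.fromBlocks_multiply]
    simp [Matrix.smul_mul, Matrix.mul_smul, smul_smul, neg_mul, mul_neg,
      inv_mul_cancel₀ hα, mul_inv_cancel₀ hα, neg_smul, Matrix.mul_assoc]
  have hrk : (Matrix.fromBlocks (U * P) 0 (α • P) (P * D)).rank =
      P.rank + (U * P * D).rank := by
    have h1 : (Matrix.fromBlocks (U * P) 0 (α • P) (P * D)).rank =
        (Matrix.fromBlocks 0 (-(α⁻¹) • (U * P * D)) (α • P) 0).rank := by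
      rw [← key,
        Matrix.rank_mul_eq_left_of_isUnit_det R _ (by rw [hRdet]; exact isUnit_one),
        Matrix.rank_mul_eq_right_of_isUnit_det L _ (by rw [hLdet]; exact isUnit_one)]
    have h2 : Matrix.fromBlocks 0 (-(α⁻¹) • (U * P * D)) (α • P) 0 =
        (Matrix.fromBlocks (α • P) 0 0 (-(α⁻¹) • (U * P * D))).submatrix
          ⇑(Equiv.sumComm (Fin a) (Fin b)) ⇑(Equiv.refl (Fin c ⊕ Fin e)) := by
      ext i j
      rcases i with i | i <;> rcases j with j | j <;> rfl
    rw [h1, h2, aux_rank_submatrix_equiv, aux_rank_fromBlocks_diag,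
      aux_rank_smul _ hα, aux_rank_smul _ (neg_ne_zero.mpr (inv_ne_zero hα))]
  refine ⟨⟨L, R, hLdet, hRdet, key⟩, hrk, ?_, ?_⟩
  · have c1 := P.rank_le_card_width
    have c2 := P.rank_le_card_height
    have c3 := (U * P * D).rank_le_card_width
    have c4 := (U * P * D).rank_le_card_height
    rw [Matrix.HasFullRank, aux_inj_iff_rank, aux_surj_iff_rank, aux_inj_iff_rank,
      aux_inj_iff_rank, aux_surj_iff_rank, aux_surj_iff_rank, hrk]
    simp only [Fintype.card_sum, Fintype.card_fin] at *
    omega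
  · intro hbc hae
    subst hbc
    subst hae
    have hPs : ∀ (h : b = b), P.submatrix id ⇑(finCongr h) = P := by
      intro h; ext i j; rfl
    have hUs : ∀ (h : a = a), (U * P * D).submatrix id ⇑(finCongr h) = U * P * D := by
      intro h; ext i j; rfl
    rw [hPs, hUs]
    have main : ∀ (pf : a + b = b + a),
        ((Matrix.fromBlocks (U * P) 0 (α • P) (P * D)).submatrix
            (⇑(finSumFinEquiv.symm) : Fin (a + b) → Fin a ⊕ Fin b)
            (fun j : Fin (a + b) => finSumFinEquiv.symm (finCongr pf j))).det =
          (-1 : k) ^ (a * (b + 1)) * P.det * (U * P * D).det * α ^ ((b : ℤ) - (a : ℤ)) := by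
      intro pf
      set e₁ : Fin (a + b) ≃ Fin a ⊕ Fin b := finSumFinEquiv.symm with he₁
      set e₂ : Fin (a + b) ≃ Fin b ⊕ Fin a := (finCongr pf).trans finSumFinEquiv.symm with he₂
      have hcol : (fun j : Fin (a + b) => finSumFinEquiv.symm (finCongr pf j)) = ⇑e₂ := rfl
      rw [hcol]
      have h3 : (L.submatrix ⇑e₁ ⇑e₁) *
          ((Matrix.fromBlocks (U * P) 0 (α • P) (P * D)).submatrix ⇑e₁ ⇑e₂) *
          (R.submatrix ⇑e₂ ⇑e₂) =
          (L * Matrix.fromBlocks (U * P) 0 (α • P) (P * D) * R).submatrix ⇑e₁ ⇑e₂ := by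
        rw [Matrix.submatrix_mul_equiv, Matrix.submatrix_mul_equiv]
      have h4 := congrArg Matrix.det h3
      rw [Matrix.det_mul, Matrix.det_mul, Matrix.det_submatrix_equiv_self e₁ L,
        Matrix.det_submatrix_equiv_self e₂ R, hLdet, hRdet, one_mul, mul_one, key] at h4
      rw [h4]
      have h5 : (Matrix.fromBlocks 0 (-(α⁻¹) • (U * P * D)) (α • P) 0 :
            Matrix (Fin a ⊕ Fin b) (Fin b ⊕ Fin a) k) =
          (Matrix.fromBlocks (-(α⁻¹) • (U * P * D)) 0 0 (α • P)).submatrix id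
            (Sum.swap : Fin b ⊕ Fin a → Fin a ⊕ Fin b) := by
        ext i j
        rcases i with i | i <;> rcases j with j | j <;> rfl
      rw [h5, Matrix.submatrix_submatrix]
      set τ : Equiv.Perm (Fin (a + b)) :=
        e₂.trans ((Equiv.sumComm (Fin b) (Fin a)).trans e₁.symm) with hτ
      have h6 : (Matrix.fromBlocks (-(α⁻¹) • (U * P * D)) 0 0 (α • P)).submatrix
          (id ∘ ⇑e₁) (Sum.swap ∘ ⇑e₂) =
          ((Matrix.fromBlocks (-(α⁻¹) • (U * P * D)) 0 0 (α • P)).submatrix ⇑e₁ ⇑e₁).submatrix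
            id ⇑τ := by
        ext i j
        simp [hτ, Matrix.submatrix_apply]
      rw [h6, Matrix.det_permute', Matrix.det_submatrix_equiv_self e₁,
        Matrix.det_fromBlocks_zero₂₁, Matrix.det_smul, Matrix.det_smul]
      have hsign : Equiv.Perm.sign τ = (-1) ^ (a * b) := by
        apply aux_sign_rot (a + b) a b rfl
        intro j
        obtain ⟨v, hv⟩ := j
        have hτj : (τ ⟨v, hv⟩ : Fin (a + b)) =
            finSumFinEquiv (Sum.swap (finSumFinEquiv.symm (finCongr pf ⟨v, hv⟩))) := rfl
        rw [hτj]
        rcases Nat.lt_or_ge v b with hvb | hvb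
        · rw [if_pos hvb, show (finCongr pf ⟨v, hv⟩ : Fin (b + a)) = Fin.castAdd a ⟨v, hvb⟩
            from rfl, finSumFinEquiv_symm_apply_castAdd]
          simp
        · rw [if_neg (Nat.not_lt.mpr hvb), show (finCongr pf ⟨v, hv⟩ : Fin (b + a)) =
              Fin.natAdd b ⟨v - b, by omega⟩ from (by apply Fin.ext; simp; omega),
            finSumFinEquiv_symm_apply_natAdd]
          simp
      rw [hsign]
      have hzp : α ^ ((b : ℤ) - (a : ℤ)) = α ^ b * (α⁻¹) ^ a := by
        rw [zpow_sub₀ hα, zpow_natCast, zpow_natCast, div_eq_mul_inv, inv_pow]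
      rw [hzp]
      rw [Fintype.card_fin, Fintype.card_fin, Units.val_pow_eq_pow_val, Units.val_neg,
        Units.val_one, Int.cast_pow, Int.cast_neg, Int.cast_one, neg_pow α⁻¹ a,
        show a * (b + 1) = a * b + a by ring, pow_add]
      ring
    exact main _
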